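/- Let M be a ℤ-module, B : M × M → ℤ a ℤ-bilinear form, t₁, …, t_l ∈ M and ε₁, …, ε_l ∈ {1, −1}. For each k let τ_k : M → M be the map τ_k(x) = x + ε_k · B(t_k, x) · t_k, and let Φ = τ_l ∘ ⋯ ∘ τ₁. Let a₁, …, a_n ∈ M satisfy B(a_j, a_i) = 0 for all i, j ∈ {1, …, n}. Define c_{ij} = Σ_{m=1}^{l} Σ_{1 ≤ k₁ < ⋯ < k_m ≤ l} ε_{k₁}⋯ε_{k_m} · B(t_{k_m}, t_{k_{m−1}}) ⋯ B(t_{k₂}, t_{k₁}) · B(t_{k₁}, a_j) · B(t_{k_m}, a_i). Then B(Φ(a_j), a_i) = c_{ij} for all i, j. -/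

import Mathlib

open Finset

lemma aux_le_last {l : ℕ} : ∀ {m : ℕ} (k : Fin (m+1) → Fin l), StrictMono k →
    m ≤ (k (Fin.last m) : ℕ) := by
  intro m
  induction m with
  | zero => intro k _; exact Nat.zero_le _
  | succ m ih =>
    intro k hk
    have h1 : m ≤ (k ((Fin.last m).castSucc) : ℕ) :=
      ih (fun i => k i.castSucc) (hk.comp Fin.strictMono_castSucc)
    have h2 : k ((Fin.last m).castSucc) < k (Fin.last (m+1)) :=
      hk (Fin.castSucc_lt_last _)
    simp only [Fin.lt_iff_val_lt_val] at h2
    omega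

lemma zsum_smul {M : Type*} [AddCommGroup M] {ι : Type*} (s : Finset ι) (r : ι → ℤ) (v : M) :
    (∑ i ∈ s, r i) • v = ∑ i ∈ s, r i • v := by
  induction s using Finset.cons_induction with
  | empty => simp
  | cons a s ha ih => rw [Finset.sum_cons, Finset.sum_cons, add_zsmul, ih]

lemma monodromy_fold {M : Type*} [AddCommGroup M] [Module ℤ M]
    (B : M →ₗ[ℤ] M →ₗ[ℤ] ℤ) (l : ℕ) (t : Fin l → M) (ε : Fin l → ℤ)
    (τ : Fin l → M → M)
    (hτ : ∀ k x, τ k x = x + (ε k * B (t k) x) • t k)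
    (x : M) :
    ∀ p, p ≤ l → ((List.ofFn τ).take p).foldl (fun x f => f x) x
      = x + ∑ m ∈ Finset.range l,
          ∑ k ∈ Finset.univ.filter (fun k : Fin (m + 1) → Fin l =>
              StrictMono k ∧ (k (Fin.last m) : ℕ) < p),
            ((∏ j', ε (k j')) * (∏ i' : Fin m, B (t (k i'.succ)) (t (k i'.castSucc))) *
              B (t (k 0)) x) • t (k (Fin.last m)) := by
  intro p
  induction p with
  | zero => simp
  | succ p ih =>
    intro hpl
    have hp : p < l := hpl
    obtain ⟨l', rfl⟩ : ∃ l', l = l' + 1 := ⟨l - 1, by omega⟩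
    set p' : Fin (l'+1) := ⟨p, hp⟩ with hp'
    have htake : (List.ofFn τ).take (p+1) = (List.ofFn τ).take p ++ [τ p'] := by
      rw [List.take_succ]
      congr 1
      rw [List.getElem?_eq_getElem (by simpa using hp), List.getElem_ofFn]
      rfl
    rw [htake, List.foldl_append, ih (le_of_lt hp)]
    simp only [List.foldl_cons, List.foldl_nil]
    rw [hτ]
    -- split the filters on the RHS
    have hsplit : ∀ m : ℕ,
        (univ.filter (fun k : Fin (m+1) → Fin (l'+1) =>
            StrictMono k ∧ (k (Fin.last m) : ℕ) < p + 1))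
        = (univ.filter (fun k : Fin (m+1) → Fin (l'+1) =>
            StrictMono k ∧ (k (Fin.last m) : ℕ) < p))
          ∪ (univ.filter (fun k : Fin (m+1) → Fin (l'+1) =>
            StrictMono k ∧ (k (Fin.last m) : ℕ) = p)) := by
      intro m
      rw [← filter_or]
      apply filter_congr
      intro k _
      constructor
      · rintro ⟨h1, h2⟩
        rcases Nat.lt_succ_iff_lt_or_eq.mp h2 with h | h
        · exact Or.inl ⟨h1, h⟩
        · exact Or.inr ⟨h1, h⟩
      · rintro (⟨h1, h2⟩ | ⟨h1, h2⟩) <;> exact ⟨h1, by omega⟩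
    have hdisj : ∀ m : ℕ, Disjoint
        (univ.filter (fun k : Fin (m+1) → Fin (l'+1) =>
            StrictMono k ∧ (k (Fin.last m) : ℕ) < p))
        (univ.filter (fun k : Fin (m+1) → Fin (l'+1) =>
            StrictMono k ∧ (k (Fin.last m) : ℕ) = p)) := by
      intro m
      rw [disjoint_left]
      intro k h1 h2
      simp only [mem_filter] at h1 h2
      omega
    have hsum : ∀ m ∈ range (l'+1),
        (∑ k ∈ univ.filter (fun k : Fin (m+1) → Fin (l'+1) =>
            StrictMono k ∧ (k (Fin.last m) : ℕ) < p + 1),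
          ((∏ j', ε (k j')) * (∏ i' : Fin m, B (t (k i'.succ)) (t (k i'.castSucc))) *
            B (t (k 0)) x) • t (k (Fin.last m)))
        = (∑ k ∈ univ.filter (fun k : Fin (m+1) → Fin (l'+1) =>
            StrictMono k ∧ (k (Fin.last m) : ℕ) < p),
          ((∏ j', ε (k j')) * (∏ i' : Fin m, B (t (k i'.succ)) (t (k i'.castSucc))) *
            B (t (k 0)) x) • t (k (Fin.last m)))
          + (∑ k ∈ univ.filter (fun k : Fin (m+1) → Fin (l'+1) =>
            StrictMono k ∧ (k (Fin.last m) : ℕ) = p),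
          ((∏ j', ε (k j')) * (∏ i' : Fin m, B (t (k i'.succ)) (t (k i'.castSucc))) *
            B (t (k 0)) x) • t (k (Fin.last m))) := by
      intro m _
      rw [hsplit m, sum_union (hdisj m)]
    rw [Finset.sum_congr rfl hsum, Finset.sum_add_distrib]
    -- the key identity
    have hT0 : (∑ k ∈ univ.filter (fun k : Fin (0+1) → Fin (l'+1) =>
            StrictMono k ∧ (k (Fin.last 0) : ℕ) = p),
          ((∏ j', ε (k j')) * (∏ i' : Fin 0, B (t (k i'.succ)) (t (k i'.castSucc))) *
            B (t (k 0)) x) • t (k (Fin.last 0)))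
        = (ε p' * B (t p') x) • t p' := by
      have hfilter : (univ.filter (fun k : Fin (0+1) → Fin (l'+1) =>
            StrictMono k ∧ (k (Fin.last 0) : ℕ) = p)) = {fun _ => p'} := by
        ext k
        simp only [mem_filter, mem_univ, true_and, mem_singleton]
        constructor
        · rintro ⟨-, h⟩
          funext i
          have hi : i = Fin.last 0 := Fin.ext (by omega)
          rw [hi]; exact Fin.ext h
        · rintro rfl
          refine ⟨fun a b hab => ?_, rfl⟩
          rw [Fin.lt_iff_val_lt_val] at hab
          omega
      rw [hfilter, sum_singleton]
      simp
    have hE : ∀ m' ∈ range l',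
        (∑ k ∈ univ.filter (fun k : Fin (m'+1+1) → Fin (l'+1) =>
            StrictMono k ∧ (k (Fin.last (m'+1)) : ℕ) = p),
          ((∏ j', ε (k j')) * (∏ i' : Fin (m'+1), B (t (k i'.succ)) (t (k i'.castSucc))) *
            B (t (k 0)) x) • t (k (Fin.last (m'+1))))
        = ∑ k ∈ univ.filter (fun k : Fin (m'+1) → Fin (l'+1) =>
            StrictMono k ∧ (k (Fin.last m') : ℕ) < p),
          (ε p' * (((∏ j', ε (k j')) * (∏ i' : Fin m', B (t (k i'.succ)) (t (k i'.castSucc))) *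
            B (t (k 0)) x) * B (t p') (t (k (Fin.last m'))))) • t p' := by
      intro m' _
      apply Finset.sum_nbij' (i := fun k => Fin.init k) (j := fun k' => Fin.snoc k' p')
      · intro k hk
        simp only [mem_filter, mem_univ, true_and] at hk ⊢
        obtain ⟨hk1, hk2⟩ := hk
        refine ⟨hk1.comp Fin.strictMono_castSucc, ?_⟩
        have h2 : k ((Fin.last m').castSucc) < k (Fin.last (m'+1)) :=
          hk1 (Fin.castSucc_lt_last _)
        simp only [Fin.lt_iff_val_lt_val] at h2
        show (k ((Fin.last m').castSucc) : ℕ) < p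
        omega
      · intro k' hk'
        simp only [mem_filter, mem_univ, true_and] at hk' ⊢
        obtain ⟨h1, h2⟩ := hk'
        constructor
        · rw [Fin.strictMono_iff_lt_succ]
          intro i
          refine Fin.lastCases ?_ ?_ i
          · rw [Fin.succ_last, Fin.snoc_last, Fin.snoc_castSucc]
            rw [Fin.lt_iff_val_lt_val]
            exact h2
          · intro j
            rw [Fin.succ_castSucc, Fin.snoc_castSucc, Fin.snoc_castSucc]
            exact h1 Fin.castSucc_lt_succ
        · rw [Fin.snoc_last]
      · intro k hk
        simp only [mem_filter, mem_univ, true_and] at hk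
        have hlast : k (Fin.last (m'+1)) = p' := Fin.ext hk.2
        rw [← hlast]
        exact Fin.snoc_init_self k
      · intro k' _
        simp
      · intro k hk
        simp only [mem_filter, mem_univ, true_and] at hk
        obtain ⟨h1, h2⟩ := hk
        have hlast : k (Fin.last (m'+1)) = p' := Fin.ext h2
        have e1 : (∏ j' : Fin (m'+1+1), ε (k j'))
            = (∏ j' : Fin (m'+1), ε (Fin.init k j')) * ε p' := by
          rw [Fin.prod_univ_castSucc, hlast]
          rfl
        have e2 : (∏ i' : Fin (m'+1), B (t (k i'.succ)) (t (k i'.castSucc)))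
            = (∏ i' : Fin m', B (t (Fin.init k i'.succ)) (t (Fin.init k i'.castSucc)))
              * B (t p') (t (Fin.init k (Fin.last m'))) := by
          have ha : ∀ i : Fin m', B (t (k i.castSucc.succ)) (t (k i.castSucc.castSucc))
              = B (t (Fin.init k i.succ)) (t (Fin.init k i.castSucc)) := by
            intro i
            rw [Fin.succ_castSucc]
            rfl
          simp only [Fin.prod_univ_castSucc]
          rw [Finset.prod_congr rfl (fun i _ => ha i), Fin.succ_last, hlast]
          rfl
        have e3 : B (t (k 0)) x = B (t (Fin.init k 0)) x := by
          simp [Fin.init]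
        rw [e1, e2, e3, hlast]
        congr 1
        ring
    have hzero : (univ.filter (fun k : Fin (l'+1) → Fin (l'+1) =>
        StrictMono k ∧ (k (Fin.last l') : ℕ) < p)) = ∅ := by
      ext k
      simp only [mem_filter, mem_univ, true_and, notMem_empty, iff_false, not_and]
      intro h1 h2
      have := aux_le_last k h1
      omega
    have key : (ε p' * B (t p') (x + ∑ m ∈ range (l'+1),
          ∑ k ∈ univ.filter (fun k : Fin (m+1) → Fin (l'+1) =>
              StrictMono k ∧ (k (Fin.last m) : ℕ) < p),
            ((∏ j', ε (k j')) * (∏ i' : Fin m, B (t (k i'.succ)) (t (k i'.castSucc))) *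
              B (t (k 0)) x) • t (k (Fin.last m)))) • t p'
        = ∑ m ∈ range (l'+1),
            ∑ k ∈ univ.filter (fun k : Fin (m+1) → Fin (l'+1) =>
              StrictMono k ∧ (k (Fin.last m) : ℕ) = p),
            ((∏ j', ε (k j')) * (∏ i' : Fin m, B (t (k i'.succ)) (t (k i'.castSucc))) *
              B (t (k 0)) x) • t (k (Fin.last m)) := by
      conv_rhs => rw [Finset.sum_range_succ']
      rw [hT0, Finset.sum_congr rfl hE]
      rw [map_add, mul_add, add_zsmul]
      have hBS : B (t p') (∑ m ∈ range (l'+1),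
            ∑ k ∈ univ.filter (fun k : Fin (m+1) → Fin (l'+1) =>
                StrictMono k ∧ (k (Fin.last m) : ℕ) < p),
              ((∏ j', ε (k j')) * (∏ i' : Fin m, B (t (k i'.succ)) (t (k i'.castSucc))) *
                B (t (k 0)) x) • t (k (Fin.last m)))
          = ∑ m ∈ range (l'+1),
              ∑ k ∈ univ.filter (fun k : Fin (m+1) → Fin (l'+1) =>
                StrictMono k ∧ (k (Fin.last m) : ℕ) < p),
              ((∏ j', ε (k j')) * (∏ i' : Fin m, B (t (k i'.succ)) (t (k i'.castSucc))) *
                B (t (k 0)) x) * B (t p') (t (k (Fin.last m))) := by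
        rw [map_sum]
        apply Finset.sum_congr rfl
        intro m _
        rw [map_sum]
        apply Finset.sum_congr rfl
        intro k _
        simp only [map_zsmul, zsmul_eq_mul, Int.cast_id]
      rw [hBS]
      simp only [Finset.mul_sum]
      simp only [zsum_smul]
      rw [Finset.sum_range_succ, hzero, Finset.sum_empty, add_zero]
      abel
    rw [key]
    abel
/-- With `τ_k (x) = x + ε_k ⬝ B(t_k, x) ⬝ t_k`, `Φ = τ_l ∘ ⋯ ∘ τ₁`,
and elements `a₁, …, a_n` with `B(a_j, a_i) = 0` for all `i, j`, the matrix
entries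
`c_{ij} = Σ_{m=1}^{l} Σ_{1 ≤ k₁ < ⋯ < k_m ≤ l} ε_{k₁}⋯ε_{k_m}
  B(t_{k_m}, t_{k_{m-1}}) ⋯ B(t_{k₂}, t_{k₁}) B(t_{k₁}, a_j) B(t_{k_m}, a_i)`
satisfy `B(Φ(a_j), a_i) = c_{ij}` for all `i, j`.
Strictly increasing tuples `1 ≤ k₁ < ⋯ < k_m ≤ l` of length `m = m' + 1`
(with `m' ∈ {0, …, l-1}`) are encoded as strictly monotone maps
`k : Fin (m' + 1) → Fin l`. -/
theorem intersection_matrix_of_monodromy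
    {M : Type*} [AddCommGroup M] [Module ℤ M]
    (B : M →ₗ[ℤ] M →ₗ[ℤ] ℤ) (l : ℕ) (t : Fin l → M) (ε : Fin l → ℤ)
    (hε : ∀ k, ε k = 1 ∨ ε k = -1)
    (τ : Fin l → M → M)
    (hτ : ∀ k x, τ k x = x + (ε k * B (t k) x) • t k)
    (n : ℕ) (a : Fin n → M)
    (ha : ∀ i j, B (a j) (a i) = 0)
    (c : Fin n → Fin n → ℤ)
    (hc : ∀ i j, c i j =
      ∑ m ∈ Finset.range l,
        ∑ k ∈ Finset.univ.filter (fun k : Fin (m + 1) → Fin l => StrictMono k),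
          (∏ j', ε (k j')) *
            (∏ i' : Fin m, B (t (k i'.succ)) (t (k i'.castSucc))) *
            B (t (k 0)) (a j) * B (t (k (Fin.last m))) (a i)) :
    ∀ i j, B ((List.ofFn τ).foldl (fun x f => f x) (a j)) (a i) = c i j := by
  intro i j
  have h := monodromy_fold B l t ε τ hτ (a j) l le_rfl
  rw [List.take_of_length_le (le_of_eq List.length_ofFn)] at h
  rw [h, map_add, LinearMap.add_apply, ha i j, zero_add, hc i j]
  rw [map_sum, LinearMap.sum_apply]
  apply Finset.sum_congr rfl
  intro m _
  rw [map_sum, LinearMap.sum_apply]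
  have hfil : (univ.filter (fun k : Fin (m+1) → Fin l =>
      StrictMono k ∧ (k (Fin.last m) : ℕ) < l))
      = univ.filter (fun k : Fin (m+1) → Fin l => StrictMono k) := by
    apply filter_congr
    intro k _
    simp [Fin.is_lt]
  rw [hfil]
  apply Finset.sum_congr rfl
  intro k _
  simp only [map_zsmul, LinearMap.smul_apply, zsmul_eq_mul, Int.cast_id]
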